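/- arXiv:0709.0252 — 4 statements merged into one kernel-verified Lean document; each statement's English description precedes it below -/
import Mathlib

section
/- Let B_n(x) be the Bell polynomials, defined by B_0(x) = 1 and B_{n+1}(x) = x·(B_n'(x) + B_n(x)) for n ≥ 0. Then for all real numbers x and t, the series ∑_{n=0}^∞ B_n(x)·t^n/n! converges and its sum equals exp(x·(e^t − 1)). -/
open Finset Polynomial Nat

/-- Stirling numbers of the second kind. -/
def stirl : ℕ → ℕ → ℕ
  | 0, 0 => 1
  | 0, _ + 1 => 0
  | _ + 1, 0 => 0
  | n + 1, k + 1 => (k + 1) * stirl n (k + 1) + stirl n k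

lemma stirl_eq_zero : ∀ {n k : ℕ}, n < k → stirl n k = 0
  | 0, _ + 1, _ => rfl
  | n + 1, k + 1, h => by
    have h1 : n < k + 1 := by omega
    have h2 : n < k := by omega
    simp [stirl, stirl_eq_zero h1, stirl_eq_zero h2]

lemma mul_desc (k j : ℕ) :
    k * k.descFactorial j = k.descFactorial (j + 1) + j * k.descFactorial j := by
  rcases lt_or_ge k j with h | h
  · simp [Nat.descFactorial_eq_zero_iff_lt.2 h,
      Nat.descFactorial_eq_zero_iff_lt.2 (by omega : k < j + 1)]
  · rw [Nat.descFactorial_succ, ← add_mul]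
    congr 1
    omega

lemma shift_sum (n : ℕ) (g : ℕ → ℕ) :
    ∑ j ∈ range (n + 1), j * stirl n j * g j
      = ∑ j ∈ range (n + 1), (j + 1) * stirl n (j + 1) * g (j + 1) := by
  rw [Finset.sum_range_succ' (fun j => j * stirl n j * g j), Finset.sum_range_succ]
  simp [stirl_eq_zero (Nat.lt_succ_self n)]

lemma pow_eq_sum_stirl (n k : ℕ) :
    k ^ n = ∑ j ∈ range (n + 1), stirl n j * k.descFactorial j := by
  induction n with
  | zero => simp [stirl]
  | succ n ih =>
    have lhs : k ^ (n + 1)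
        = ∑ j ∈ range (n + 1), (stirl n j * k.descFactorial (j + 1)
            + j * stirl n j * k.descFactorial j) := by
      rw [pow_succ, ih, Finset.sum_mul]
      exact Finset.sum_congr rfl fun j _ => by rw [mul_comm _ k, mul_left_comm, mul_desc]; ring
    rw [lhs, Finset.sum_range_succ' (fun j => stirl (n + 1) j * k.descFactorial j)]
    have h0 : stirl (n + 1) 0 * k.descFactorial 0 = 0 := by simp [stirl]
    rw [h0, add_zero, Finset.sum_add_distrib, shift_sum n (fun j => k.descFactorial j)]
    rw [← Finset.sum_add_distrib]
    exact Finset.sum_congr rfl fun j _ => by simp [stirl]; ring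

/-- The Bell polynomials, defined by `B₀ = 1` and `B_{n+1} = X * (Bₙ' + Bₙ)`. -/
noncomputable def Bell : ℕ → Polynomial ℝ
  | 0 => 1
  | n + 1 => Polynomial.X * (Polynomial.derivative (Bell n) + Bell n)

lemma X_mul_derivative (c : ℝ) (j : ℕ) :
    X * derivative (C c * X ^ j) = C ((j : ℝ) * c) * X ^ j := by
  rw [derivative_C_mul, derivative_X_pow]
  cases j with
  | zero => simp
  | succ j =>
    simp only [Nat.add_sub_cancel]
    rw [C_mul]
    ring

lemma shift_gen {M : Type*} [AddCommMonoid M] (n : ℕ) (f : ℕ → M) (h0 : f 0 = 0)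
    (hn : f (n + 1) = 0) :
    ∑ j ∈ range (n + 1), f j = ∑ j ∈ range (n + 1), f (j + 1) := by
  rw [Finset.sum_range_succ' f, h0, add_zero, Finset.sum_range_succ, hn, add_zero]

lemma bell_eq (n : ℕ) :
    Bell n = ∑ j ∈ range (n + 1), C (stirl n j : ℝ) * X ^ j := by
  induction n with
  | zero => simp [Bell, stirl]
  | succ n ih =>
    show X * (derivative (Bell n) + Bell n) = _
    rw [ih, derivative_sum]
    rw [mul_add, Finset.mul_sum, Finset.mul_sum]
    simp_rw [X_mul_derivative]
    have h2 : ∀ j : ℕ, X * (C (stirl n j : ℝ) * X ^ j) = C (stirl n j : ℝ) * X ^ (j + 1) :=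
      fun j => by ring
    simp_rw [h2]
    rw [shift_gen n (fun j => C ((j : ℝ) * (stirl n j : ℝ)) * X ^ j) (by simp)
      (by simp [stirl_eq_zero (Nat.lt_succ_self n)])]
    rw [Finset.sum_range_succ' (fun j => C ((stirl (n + 1) j : ℕ) : ℝ) * X ^ j)]
    have hz : stirl (n + 1) 0 = 0 := rfl
    rw [hz, ← Finset.sum_add_distrib]
    simp only [Nat.cast_zero, map_zero, zero_mul, add_zero]
    refine Finset.sum_congr rfl fun j _ => ?_
    have hs : stirl (n + 1) (j + 1) = (j + 1) * stirl n (j + 1) + stirl n j := rfl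
    rw [hs, ← add_mul, ← C_add]
    push_cast
    ring_nf

lemma bell_eval (n : ℕ) (x : ℝ) :
    (Bell n).eval x = ∑ j ∈ range (n + 1), (stirl n j : ℝ) * x ^ j := by
  simp [bell_eq, eval_finset_sum]

lemma hasSum_exp' (y : ℝ) : HasSum (fun n : ℕ => y ^ n / n !) (Real.exp y) := by
  rw [Real.exp_eq_exp_ℝ]
  exact NormedSpace.expSeries_div_hasSum_exp y

lemma hasSum_desc (j : ℕ) (x : ℝ) :
    HasSum (fun k : ℕ => (k.descFactorial j : ℝ) * x ^ k / k !) (x ^ j * Real.exp x) := by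
  have hinj : Function.Injective (fun m : ℕ => m + j) := add_left_injective j
  refine (Function.Injective.hasSum_iff hinj ?_).1 ?_
  · intro k hk
    have hlt : k < j := by
      by_contra h
      exact hk ⟨k - j, by simp; omega⟩
    rw [Nat.descFactorial_eq_zero_iff_lt.2 hlt]
    simp
  · have key : ∀ m : ℕ, (((m + j).descFactorial j : ℕ) : ℝ) * x ^ (m + j) / (m + j)!
        = x ^ j * (x ^ m / m !) := by
      intro m
      have hd : m ! * (m + j).descFactorial j = (m + j)! := by
        have := Nat.factorial_mul_descFactorial (show j ≤ m + j by omega)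
        simpa using this
      have h1 : ((m + j)! : ℝ) ≠ 0 := Nat.cast_ne_zero.2 (Nat.factorial_ne_zero _)
      have h2 : ((m : ℕ)! : ℝ) ≠ 0 := Nat.cast_ne_zero.2 (Nat.factorial_ne_zero _)
      field_simp
      rw [mul_assoc _ (x ^ j), ← pow_add]
      push_cast [← hd]
      ring
    show HasSum (fun m => (((m + j).descFactorial j : ℕ) : ℝ) * x ^ (m + j) / (m + j)!) _
    simp only [key]
    exact (hasSum_exp' x).mul_left (x ^ j)

lemma dobinski (n : ℕ) (x : ℝ) :
    HasSum (fun k : ℕ => (k : ℝ) ^ n * x ^ k / k !) ((Bell n).eval x * Real.exp x) := by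
  have key : ∀ k : ℕ, (k : ℝ) ^ n * x ^ k / k !
      = ∑ j ∈ range (n + 1), (stirl n j : ℝ) * ((k.descFactorial j : ℝ) * x ^ k / k !) := by
    intro k
    rw [← Nat.cast_pow, pow_eq_sum_stirl n k]
    push_cast
    rw [Finset.sum_mul, Finset.sum_div]
    exact Finset.sum_congr rfl fun j _ => by ring
  simp only [key]
  have h := hasSum_sum (s := range (n + 1))
    (f := fun j k => (stirl n j : ℝ) * ((k.descFactorial j : ℝ) * x ^ k / k !))
    (a := fun j => (stirl n j : ℝ) * (x ^ j * Real.exp x))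
    (fun j _ => (hasSum_desc j x).mul_left _)
  convert h using 1
  rw [bell_eval, Finset.sum_mul]
  exact Finset.sum_congr rfl fun j _ => by ring

set_option maxHeartbeats 1600000 in
/-- For all real `x` and `t`, the series `∑ Bₙ(x) tⁿ/n!` converges with sum
`exp (x (eᵗ - 1))`. -/
theorem bell_generating_function (x t : ℝ) :
    HasSum (fun n : ℕ => (Bell n).eval x * t ^ n / (n.factorial : ℝ))
      (Real.exp (x * (Real.exp t - 1))) := by
  set F : ℕ × ℕ → ℝ := fun p =>
    Real.exp (-x) * (x ^ p.1 / p.1 !) * (((p.1 : ℝ) * t) ^ p.2 / p.2 !) with hFdef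
  -- summability of the double series
  have hG : Summable fun p : ℕ × ℕ =>
      Real.exp (-x) * (|x| ^ p.1 / p.1 !) * (((p.1 : ℝ) * |t|) ^ p.2 / p.2 !) := by
    rw [summable_prod_of_nonneg]
    · constructor
      · intro k
        dsimp only
        exact ((hasSum_exp' ((k : ℝ) * |t|)).mul_left _).summable
      · dsimp only
        have hfib : ∀ k : ℕ, ∑' n : ℕ,
            Real.exp (-x) * (|x| ^ k / k !) * (((k : ℝ) * |t|) ^ n / n !)
            = Real.exp (-x) * ((|x| * Real.exp |t|) ^ k / k !) := by
          intro k
          rw [((hasSum_exp' ((k : ℝ) * |t|)).mul_left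
            (Real.exp (-x) * (|x| ^ k / k !))).tsum_eq]
          rw [mul_pow, ← Real.exp_nat_mul]
          ring
        simp only [hfib]
        exact ((hasSum_exp' (|x| * Real.exp |t|)).mul_left _).summable
    · intro p
      positivity
  have hFsum : Summable F := by
    apply Summable.of_norm
    convert hG using 2 with p
    rw [hFdef]
    simp only [norm_mul, norm_div, norm_pow, Real.norm_eq_abs,
      abs_of_pos (Real.exp_pos (-x)), Nat.abs_cast, abs_mul]
  have hF : HasSum F (∑' p, F p) := hFsum.hasSum
  -- summing over n first gives exp (x (exp t - 1))
  have hg : HasSum (fun k : ℕ => Real.exp (-x) * (x ^ k / k !) * Real.exp ((k : ℝ) * t))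
      (∑' p, F p) :=
    hF.prod_fiberwise fun k => (hasSum_exp' ((k : ℝ) * t)).mul_left _
  have hg2 : HasSum (fun k : ℕ => Real.exp (-x) * (x ^ k / k !) * Real.exp ((k : ℝ) * t))
      (Real.exp (x * (Real.exp t - 1))) := by
    have heq : ∀ k : ℕ, Real.exp (-x) * (x ^ k / k !) * Real.exp ((k : ℝ) * t)
        = Real.exp (-x) * ((x * Real.exp t) ^ k / k !) := by
      intro k
      rw [mul_pow, ← Real.exp_nat_mul]
      ring
    simp only [heq]
    have := (hasSum_exp' (x * Real.exp t)).mul_left (Real.exp (-x))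
    rwa [← Real.exp_add, show -x + x * Real.exp t = x * (Real.exp t - 1) by ring] at this
  have hS : ∑' p, F p = Real.exp (x * (Real.exp t - 1)) := hg.unique hg2
  -- summing over k first gives the Bell polynomial series
  have hswap : HasSum (F ∘ (Equiv.prodComm ℕ ℕ)) (∑' p, F p) :=
    (Equiv.prodComm ℕ ℕ).hasSum_iff.2 hF
  have hfinal : HasSum (fun n : ℕ => (Bell n).eval x * t ^ n / (n.factorial : ℝ))
      (∑' p, F p) := by
    refine hswap.prod_fiberwise fun n => ?_
    have h := (dobinski n x).mul_left (Real.exp (-x) * (t ^ n / n !))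
    have hfun : ∀ k : ℕ, Real.exp (-x) * (t ^ n / n !) * ((k : ℝ) ^ n * x ^ k / k !)
        = (F ∘ (Equiv.prodComm ℕ ℕ)) (n, k) := by
      intro k
      simp only [Function.comp, Equiv.prodComm_apply, Prod.swap_prod_mk, hFdef, mul_pow]
      ring
    have hsum : Real.exp (-x) * (t ^ n / n !) * ((Bell n).eval x * Real.exp x)
        = (Bell n).eval x * t ^ n / (n.factorial : ℝ) := by
      rw [Real.exp_neg]
      field_simp
    rw [← hsum]
    simpa only [hfun] using h
  rwa [hS] at hfinal
end

section
/- For u, v > 0, define ψ(u,v) = v/LW₀(v/u) + v·ln(v/LW₀(v/u)) − (u + v). Then for all u, v > 0, the partial derivatives of ψ exist and satisfy ∂ψ/∂u(u,v) = v/(u·LW₀(v/u)) − 1 and ∂ψ/∂v(u,v) = ln(v/LW₀(v/u)); consequently ψ solves the eikonal equation exp(∂ψ/∂v) = u·(∂ψ/∂u + 1) on (0,∞)². -/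
open Real Set Filter

/-- The principal branch of the Lambert W function on the nonnegative reals:
for `z ≥ 0`, `LW0 z` is the unique `w ≥ 0` with `w·exp w = z`. -/
noncomputable def LW0 (z : ℝ) : ℝ :=
  Function.invFunOn (fun w => w * Real.exp w) (Set.Ici 0) z

/-- The phase function `ψ(u,v) = v/LW₀(v/u) + v·ln(v/LW₀(v/u)) − (u + v)`. -/
noncomputable def psi (u v : ℝ) : ℝ :=
  v / LW0 (v / u) + v * Real.log (v / LW0 (v / u)) - (u + v)

private lemma fwe_strictMonoOn : StrictMonoOn (fun w : ℝ => w * Real.exp w) (Set.Ici 0) := by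
  intro a ha b hb hab
  simp only [mem_Ici] at ha hb
  have := Real.exp_lt_exp.2 hab
  show a * Real.exp a < b * Real.exp b
  nlinarith [Real.exp_pos a, Real.exp_pos b]

private lemma LW0_spec {z : ℝ} (hz : 0 ≤ z) :
    0 ≤ LW0 z ∧ LW0 z * Real.exp (LW0 z) = z := by
  have hex : ∃ w ∈ Set.Ici (0 : ℝ), w * Real.exp w = z := by
    have hcont : ContinuousOn (fun w : ℝ => w * Real.exp w) (Set.Icc 0 z) :=
      (continuous_id.mul Real.continuous_exp).continuousOn
    have h0 : (fun w : ℝ => w * Real.exp w) 0 = 0 := by simp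
    have hzz : z ≤ z * Real.exp z := by
      have : (1 : ℝ) ≤ Real.exp z := Real.one_le_exp hz
      nlinarith
    have := intermediate_value_Icc hz hcont
    have hmem : z ∈ (fun w : ℝ => w * Real.exp w) '' Set.Icc 0 z := by
      apply this
      constructor
      · simpa using hz
      · simpa using hzz
    obtain ⟨w, hw, hwz⟩ := hmem
    exact ⟨w, hw.1, hwz⟩
  constructor
  · exact Function.invFunOn_mem hex
  · exact Function.invFunOn_eq hex

private lemma LW0_pos {z : ℝ} (hz : 0 < z) : 0 < LW0 z := by
  obtain ⟨h1, h2⟩ := LW0_spec hz.le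
  rcases h1.lt_or_eq with h | h
  · exact h
  · exfalso; rw [← h] at h2; simp at h2; linarith

private lemma LW0_eq {w : ℝ} (hw : 0 ≤ w) : LW0 (w * Real.exp w) = w := by
  have hz : 0 ≤ w * Real.exp w := by positivity
  obtain ⟨h1, h2⟩ := LW0_spec hz
  exact fwe_strictMonoOn.injOn h1 hw h2

private lemma LW0_monotoneOn : MonotoneOn LW0 (Set.Ici 0) := by
  intro a ha b hb hab
  simp only [mem_Ici] at ha hb
  by_contra h
  push_neg at h
  obtain ⟨ha1, ha2⟩ := LW0_spec ha
  obtain ⟨hb1, hb2⟩ := LW0_spec hb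
  have := fwe_strictMonoOn hb1 ha1 h
  simp only at this
  rw [ha2, hb2] at this
  linarith

private lemma LW0_continuousAt {z : ℝ} (hz : 0 < z) : ContinuousAt LW0 z := by
  apply continuousAt_of_monotoneOn_of_image_mem_nhds LW0_monotoneOn
    (Ici_mem_nhds hz)
  have : Set.Ici (0:ℝ) ⊆ LW0 '' Set.Ici 0 := by
    intro w hw
    simp only [mem_Ici] at hw
    exact ⟨w * Real.exp w, Set.mem_Ici.2 (by positivity), LW0_eq hw⟩
  exact mem_of_superset (Ioi_mem_nhds (LW0_pos hz)) (le_trans Ioi_subset_Ici_self this)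

private lemma hasDerivAt_fwe (w : ℝ) :
    HasDerivAt (fun w : ℝ => w * Real.exp w) ((1 + w) * Real.exp w) w := by
  have := (hasDerivAt_id w).mul (Real.hasDerivAt_exp w)
  refine this.congr_deriv ?_
  simp only [id]; ring

private lemma hasDerivAt_LW0 {z : ℝ} (hz : 0 < z) :
    HasDerivAt LW0 (((1 + LW0 z) * Real.exp (LW0 z))⁻¹) z := by
  have hW := LW0_pos hz
  have h0W : 0 ≤ LW0 z := (LW0_spec hz.le).1
  apply HasDerivAt.of_local_left_inverse (LW0_continuousAt hz) (hasDerivAt_fwe (LW0 z))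
  · exact ne_of_gt (mul_pos (by linarith) (Real.exp_pos _))
  · filter_upwards [Ioi_mem_nhds hz] with y hy
    exact (LW0_spec (le_of_lt hy)).2

private lemma psi_eq {u v : ℝ} (hu : 0 < u) (hv : 0 < v) :
    psi u v = u * Real.exp (LW0 (v / u)) + v * (Real.log u + LW0 (v / u)) - (u + v) := by
  have hz : 0 < v / u := by positivity
  obtain ⟨_, hWe⟩ := LW0_spec hz.le
  have hW := LW0_pos hz
  have hveq : v = u * (LW0 (v / u) * Real.exp (LW0 (v / u))) := by
    field_simp at hWe; linarith
  have hdiv : v / LW0 (v / u) = u * Real.exp (LW0 (v / u)) := by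
    rw [div_eq_iff (ne_of_gt hW)]
    field_simp at hWe
    nlinarith
  have hlog : Real.log (v / LW0 (v / u)) = Real.log u + LW0 (v / u) := by
    rw [hdiv, Real.log_mul (ne_of_gt hu) (ne_of_gt (Real.exp_pos _)), Real.log_exp]
  rw [psi, hlog, hdiv]

/-- The partial derivatives of `ψ` are `ψ_u = v/(u·LW₀(v/u)) − 1` and
`ψ_v = ln(v/LW₀(v/u))`, and `ψ` solves the eikonal equation `exp(ψ_v) = u·(ψ_u + 1)`. -/
theorem psi_partials_and_eikonal (u v : ℝ) (hu : 0 < u) (hv : 0 < v) :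
    HasDerivAt (fun u' => psi u' v) (v / (u * LW0 (v / u)) - 1) u ∧
    HasDerivAt (fun v' => psi u v') (Real.log (v / LW0 (v / u))) v ∧
    Real.exp (Real.log (v / LW0 (v / u))) = u * ((v / (u * LW0 (v / u)) - 1) + 1) := by
  have hz : 0 < v / u := by positivity
  set W := LW0 (v / u) with hWdef
  obtain ⟨_, hWe⟩ := LW0_spec hz.le
  have hW : 0 < W := LW0_pos hz
  have hE : (0:ℝ) < Real.exp W := Real.exp_pos W
  have hveq : v = u * (W * Real.exp W) := by
    field_simp at hWe; linarith
  have hdivW : v / (u * W) = Real.exp W := by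
    rw [hveq]; field_simp
  have hdiv : v / W = u * Real.exp W := by
    rw [hveq]; field_simp
  have hlog : Real.log (v / W) = Real.log u + W := by
    rw [hdiv, Real.log_mul (ne_of_gt hu) (ne_of_gt hE), Real.log_exp]
  refine ⟨?_, ?_, ?_⟩
  · -- ∂ψ/∂u
    have hinner : HasDerivAt (fun u' : ℝ => v / u') (-(v / u ^ 2)) u := by
      have h := (hasDerivAt_inv (ne_of_gt hu)).const_mul v
      simp only [div_eq_mul_inv]
      refine h.congr_deriv ?_
      ring
    have hL : HasDerivAt (fun u' : ℝ => LW0 (v / u'))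
        (((1 + W) * Real.exp W)⁻¹ * (-(v / u ^ 2))) u :=
      (hasDerivAt_LW0 hz).comp u hinner
    have hg : HasDerivAt
        (fun u' : ℝ => u' * Real.exp (LW0 (v / u')) + v * (Real.log u' + LW0 (v / u')) - (u' + v))
        (1 * Real.exp W + u * (Real.exp W * (((1 + W) * Real.exp W)⁻¹ * (-(v / u ^ 2)))) +
          v * (u⁻¹ + ((1 + W) * Real.exp W)⁻¹ * (-(v / u ^ 2))) - (1 + 0)) u := by
      exact (((hasDerivAt_id u).mul hL.exp).add
        ((Real.hasDerivAt_log (ne_of_gt hu)).add hL |>.const_mul v)).sub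
        ((hasDerivAt_id u).add (hasDerivAt_const u v))
    have heq : (fun u' => psi u' v) =ᶠ[nhds u]
        (fun u' : ℝ => u' * Real.exp (LW0 (v / u')) + v * (Real.log u' + LW0 (v / u')) - (u' + v)) := by
      filter_upwards [Ioi_mem_nhds hu] with u' hu'
      exact psi_eq hu' hv
    have := hg.congr_of_eventuallyEq heq
    refine this.congr_deriv ?_
    rw [hdivW, hveq]
    have h1W : (0:ℝ) < 1 + W := by linarith
    field_simp
    ring
  · -- ∂ψ/∂v
    have hinner : HasDerivAt (fun v' : ℝ => v' / u) u⁻¹ v := by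
      have := (hasDerivAt_id v).div_const u
      simpa using this
    have hL : HasDerivAt (fun v' : ℝ => LW0 (v' / u))
        (((1 + W) * Real.exp W)⁻¹ * u⁻¹) v :=
      (hasDerivAt_LW0 hz).comp v hinner
    have hg : HasDerivAt
        (fun v' : ℝ => u * Real.exp (LW0 (v' / u)) + v' * (Real.log u + LW0 (v' / u)) - (u + v'))
        (u * (Real.exp W * (((1 + W) * Real.exp W)⁻¹ * u⁻¹)) +
          (1 * (Real.log u + W) + v * (0 + ((1 + W) * Real.exp W)⁻¹ * u⁻¹)) - (0 + 1)) v := by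
      exact ((hL.exp.const_mul u).add
        ((hasDerivAt_id v).mul ((hasDerivAt_const v (Real.log u)).add hL))).sub
        ((hasDerivAt_const v u).add (hasDerivAt_id v))
    have heq : (fun v' => psi u v') =ᶠ[nhds v]
        (fun v' : ℝ => u * Real.exp (LW0 (v' / u)) + v' * (Real.log u + LW0 (v' / u)) - (u + v')) := by
      filter_upwards [Ioi_mem_nhds hv] with v' hv'
      exact psi_eq hu hv'
    have := hg.congr_of_eventuallyEq heq
    refine this.congr_deriv ?_
    rw [hlog, hveq]
    have h1W : (0:ℝ) < 1 + W := by linarith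
    field_simp
    ring
  · -- eikonal
    have hpos : 0 < v / W := by positivity
    rw [Real.exp_log hpos, hdiv]
    rw [hdivW]
    ring
end

section
/- For u, v > 0, define K(u,v) = (LW₀(v/u) + 1)^{−1/2} and ψ(u,v) = v/LW₀(v/u) + v·ln(v/LW₀(v/u)) − (u + v). Then K solves the transport equation ∂K/∂v + (1/2)·(∂²ψ/∂v²)·K − u·exp(−∂ψ/∂v)·∂K/∂u = 0 on (0,∞)²; explicitly, with w = LW₀(v/u), ∂K/∂v + (w/(2v(w+1)))·K − (u·w/v)·∂K/∂u = 0. Moreover, for every fixed u > 0, K(u,v) → 1 as v → 0⁺. -/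
/-- The amplitude `K(u,v) = (LW₀(v/u) + 1)^{-1/2}`. -/
noncomputable def Kamp (u v : ℝ) : ℝ :=
  (LW0 (v / u) + 1) ^ (-(1 : ℝ) / 2)

namespace LWaux

/-- Globalized strictly monotone extension of `w ↦ w e^w`. -/
noncomputable def g (w : ℝ) : ℝ := if 0 ≤ w then w * Real.exp w else w

lemma g_of_nonneg {w : ℝ} (hw : 0 ≤ w) : g w = w * Real.exp w := if_pos hw

lemma fmono : StrictMonoOn (fun w => w * Real.exp w) (Set.Ici 0) := by
  intro a ha b hb hab
  have h1 : a * Real.exp a ≤ a * Real.exp b :=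
    mul_le_mul_of_nonneg_left (Real.exp_le_exp.2 hab.le) ha
  have h2 : a * Real.exp b < b * Real.exp b :=
    mul_lt_mul_of_pos_right hab (Real.exp_pos b)
  exact lt_of_le_of_lt h1 h2

lemma gmono : StrictMono g := by
  intro a b hab
  unfold g
  by_cases ha : 0 ≤ a
  · rw [if_pos ha, if_pos (ha.trans hab.le)]
    exact fmono ha (ha.trans hab.le) hab
  · rw [if_neg ha]
    by_cases hb : 0 ≤ b
    · rw [if_pos hb]
      have : (0:ℝ) ≤ b * Real.exp b := mul_nonneg hb (Real.exp_pos b).le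
      linarith [not_le.1 ha]
    · rw [if_neg hb]; exact hab

lemma exists_f (z : ℝ) (hz : 0 ≤ z) : ∃ w ∈ Set.Ici (0:ℝ), w * Real.exp w = z := by
  have hc : ContinuousOn (fun w => w * Real.exp w) (Set.Icc 0 z) :=
    (continuous_id.mul Real.continuous_exp).continuousOn
  have hmem : z ∈ Set.Icc ((fun w => w * Real.exp w) 0) ((fun w => w * Real.exp w) z) := by
    constructor
    · simpa using hz
    · simpa using le_mul_of_one_le_right hz (Real.one_le_exp hz)
  obtain ⟨w, hw, hfw⟩ := intermediate_value_Icc hz hc hmem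
  exact ⟨w, hw.1, hfw⟩

lemma gsurj : Function.Surjective g := by
  intro z
  by_cases hz : 0 ≤ z
  · obtain ⟨w, hw, hfw⟩ := exists_f z hz
    exact ⟨w, by rw [g_of_nonneg hw]; exact hfw⟩
  · exact ⟨z, by unfold g; rw [if_neg hz]⟩

/-- `g` as an order isomorphism of `ℝ`. -/
noncomputable def giso : ℝ ≃o ℝ := StrictMono.orderIsoOfSurjective g gmono gsurj

lemma giso_apply (w : ℝ) : giso w = g w := rfl

lemma LW0_nonneg {z : ℝ} (hz : 0 ≤ z) : 0 ≤ LW0 z :=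
  Function.invFunOn_mem (exists_f z hz)

lemma LW0_spec {z : ℝ} (hz : 0 ≤ z) : LW0 z * Real.exp (LW0 z) = z :=
  Function.invFunOn_eq (exists_f z hz)

lemma LW0_eq_symm {z : ℝ} (hz : 0 ≤ z) : LW0 z = giso.symm z := by
  apply gmono.injective
  rw [g_of_nonneg (LW0_nonneg hz), LW0_spec hz]
  have : giso (giso.symm z) = z := giso.apply_symm_apply z
  rw [giso_apply] at this
  rw [this]

lemma continuousAt_LW0 {z : ℝ} (hz : 0 < z) : ContinuousAt LW0 z := by
  have hsc : Continuous (giso.symm : ℝ → ℝ) := OrderIso.continuous _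
  apply hsc.continuousAt.congr
  filter_upwards [eventually_gt_nhds hz] with y hy
  exact (LW0_eq_symm hy.le).symm

lemma LW0_pos {z : ℝ} (hz : 0 < z) : 0 < LW0 z := by
  rcases (LW0_nonneg hz.le).lt_or_eq with h | h
  · exact h
  · exfalso; have := LW0_spec hz.le; rw [← h] at this; simp at this; linarith

lemma hasDerivAt_LW0 {z : ℝ} (hz : 0 < z) :
    HasDerivAt LW0 (((LW0 z + 1) * Real.exp (LW0 z))⁻¹) z := by
  have hf : HasDerivAt (fun w => w * Real.exp w)
      ((LW0 z + 1) * Real.exp (LW0 z)) (LW0 z) := by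
    have := (hasDerivAt_id (LW0 z)).mul (Real.hasDerivAt_exp (LW0 z))
    exact this.congr_deriv (by simp only [id]; ring)
  have hne : (LW0 z + 1) * Real.exp (LW0 z) ≠ 0 := by
    have := LW0_nonneg hz.le
    positivity
  exact HasDerivAt.of_local_left_inverse (continuousAt_LW0 hz) hf hne
    (by filter_upwards [eventually_gt_nhds hz] with y hy; exact LW0_spec hy.le)

end LWaux

/-- `K` solves the transport equation
`∂K/∂v + (w/(2v(w+1)))·K − (u·w/v)·∂K/∂u = 0` with `w = LW₀(v/u)`,
and `K(u,v) → 1` as `v → 0⁺` for every fixed `u > 0`. -/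
theorem K_solves_transport (u v : ℝ) (hu : 0 < u) (hv : 0 < v) :
    DifferentiableAt ℝ (fun v' => Kamp u v') v ∧
    DifferentiableAt ℝ (fun u' => Kamp u' v) u ∧
    deriv (fun v' => Kamp u v') v
      + LW0 (v / u) / (2 * v * (LW0 (v / u) + 1)) * Kamp u v
      - u * LW0 (v / u) / v * deriv (fun u' => Kamp u' v) u = 0 ∧
    Filter.Tendsto (fun v' => Kamp u v') (nhdsWithin 0 (Set.Ioi 0)) (nhds 1) := by
  have hz : 0 < v / u := div_pos hv hu
  set w := LW0 (v / u) with hw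
  have hwpos : 0 < w := LWaux.LW0_pos hz
  have hwe : w * Real.exp w = v / u := LWaux.LW0_spec hz.le
  have hexp : (0:ℝ) < Real.exp w := Real.exp_pos w
  have hw1 : (0:ℝ) < w + 1 := by linarith
  -- derivative of LW0 at v/u
  have hLW : HasDerivAt LW0 (((w + 1) * Real.exp w)⁻¹) (v / u) := LWaux.hasDerivAt_LW0 hz
  -- rpow outer function
  have hrpow : HasDerivAt (fun x : ℝ => x ^ (-(1:ℝ)/2))
      ((-(1:ℝ)/2) * (w + 1) ^ ((-(1:ℝ)/2) - 1)) (w + 1) :=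
    Real.hasDerivAt_rpow_const (Or.inl hw1.ne')
  -- v-direction
  have hv1 : HasDerivAt (fun v' => v' / u) (1 / u) v := by
    simpa using (hasDerivAt_id v).div_const u
  have hvK : HasDerivAt (fun v' => Kamp u v')
      ((-(1:ℝ)/2) * (w + 1) ^ ((-(1:ℝ)/2) - 1) * (((w + 1) * Real.exp w)⁻¹ * (1 / u))) v := by
    have h2 : HasDerivAt (fun v' => LW0 (v' / u) + 1)
        (((w + 1) * Real.exp w)⁻¹ * (1 / u)) v := ((hLW.comp v hv1).add_const 1)
    exact hrpow.comp v h2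
  -- u-direction
  have hu1 : HasDerivAt (fun u' => v / u') (-(v / u ^ 2)) u := by
    have := (hasDerivAt_inv hu.ne').const_mul v
    exact this.congr_deriv (by ring)
  have hLW' : HasDerivAt LW0 (((w + 1) * Real.exp w)⁻¹) (v / u) := hLW
  have huK : HasDerivAt (fun u' => Kamp u' v)
      ((-(1:ℝ)/2) * (w + 1) ^ ((-(1:ℝ)/2) - 1) * (((w + 1) * Real.exp w)⁻¹ * (-(v / u ^ 2)))) u := by
    have h2 : HasDerivAt (fun u' => LW0 (v / u') + 1)
        (((w + 1) * Real.exp w)⁻¹ * (-(v / u ^ 2))) u := ((hLW'.comp u hu1).add_const 1)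
    exact hrpow.comp u h2
  refine ⟨hvK.differentiableAt, huK.differentiableAt, ?_, ?_⟩
  · rw [hvK.deriv, huK.deriv]
    have hK : Kamp u v = (w + 1) ^ ((-(1:ℝ)/2) - 1) * (w + 1) := by
      rw [Kamp, ← hw]
      rw [show ((-(1:ℝ))/2) = ((-(1:ℝ)/2) - 1) + 1 by ring, Real.rpow_add hw1, Real.rpow_one]; norm_num
    rw [hK]
    have hveq : v = u * (w * Real.exp w) := by
      rw [hwe]; field_simp
    set B := (w + 1) ^ ((-(1:ℝ)/2) - 1) with hB
    rw [hveq]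
    field_simp
    ring
  · -- the limit as v → 0⁺
    have h1 : Filter.Tendsto (fun v' => v' / u) (nhdsWithin 0 (Set.Ioi 0))
        (nhdsWithin 0 (Set.Ioi 0)) := by
      apply Filter.Tendsto.inf
      · simpa using (continuous_id.div_const u).tendsto 0
      · apply Filter.tendsto_principal_principal.2
        intro x hx
        exact div_pos hx hu
    have h2 : Filter.Tendsto LW0 (nhdsWithin 0 (Set.Ioi 0)) (nhds 0) := by
      have hsc : Continuous (LWaux.giso.symm : ℝ → ℝ) := OrderIso.continuous _
      have h0 : (LWaux.giso.symm : ℝ → ℝ) 0 = 0 := by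
        apply LWaux.gmono.injective
        have : LWaux.giso (LWaux.giso.symm 0) = 0 := LWaux.giso.apply_symm_apply 0
        rw [LWaux.giso_apply] at this
        rw [this, LWaux.g_of_nonneg le_rfl]
        simp
      have := (hsc.tendsto 0).mono_left (nhdsWithin_le_nhds (s := Set.Ioi 0))
      rw [h0] at this
      apply this.congr'
      filter_upwards [self_mem_nhdsWithin] with x hx
      exact (LWaux.LW0_eq_symm (le_of_lt hx)).symm
    have h3 : Filter.Tendsto (fun v' => LW0 (v' / u) + 1) (nhdsWithin 0 (Set.Ioi 0))
        (nhds 1) := by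
      have := (h2.comp h1).add_const 1
      simpa using this
    have h4 : Filter.Tendsto (fun x : ℝ => x ^ (-(1:ℝ)/2)) (nhds 1) (nhds 1) := by
      have : ContinuousAt (fun x : ℝ => x ^ (-(1:ℝ)/2)) 1 :=
        (Real.continuousAt_rpow_const 1 _ (Or.inl one_ne_zero))
      simpa [Real.one_rpow] using this.tendsto
    exact h4.comp h3
end

section
/- Let LW₀ denote the real branch of the Lambert W function with values in [−1, 0) on [−e^{−1}, 0), and LW₋₁ the branch with values in (−∞, −1]. Then as z → (−e^{−1})⁺ along (−e^{−1}, 0), one has (LW₀(z) + 1)/√(2e·(z + e^{−1})) → 1 and (LW₋₁(z) + 1)/√(2e·(z + e^{−1})) → −1. -/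
/-- The principal real branch of the Lambert W function on `[−e⁻¹, 0)`:
the unique `w ∈ [−1, 0)` with `w·exp w = z`. -/
noncomputable def LW0neg (z : ℝ) : ℝ :=
  Function.invFunOn (fun w => w * Real.exp w) (Set.Ico (-1) 0) z

/-- The branch `LW₋₁` of the Lambert W function on `[−e⁻¹, 0)`:
the unique `w ≤ −1` with `w·exp w = z`. -/
noncomputable def LWm1 (z : ℝ) : ℝ :=
  Function.invFunOn (fun w => w * Real.exp w) (Set.Iic (-1)) z

open Real Set Filter Topology

private lemma flam_hasDeriv (w : ℝ) :
    HasDerivAt (fun w : ℝ => w * Real.exp w) ((w + 1) * Real.exp w) w := by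
  have : HasDerivAt (fun w : ℝ => w * Real.exp w) (1 * Real.exp w + id w * Real.exp w) w :=
    (hasDerivAt_id w).mul (Real.hasDerivAt_exp w)
  convert this using 1; simp [id]; ring

private lemma flam_cont : Continuous (fun w : ℝ => w * Real.exp w) :=
  continuous_id.mul Real.continuous_exp

private lemma flam_mono : StrictMonoOn (fun w : ℝ => w * Real.exp w) (Set.Ici (-1)) := by
  apply strictMonoOn_of_deriv_pos (convex_Ici _) flam_cont.continuousOn
  intro x hx
  rw [interior_Ici] at hx
  rw [(flam_hasDeriv x).deriv]
  have : 0 < x + 1 := by linarith [mem_Ioi.mp hx]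
  positivity

private lemma flam_anti : StrictAntiOn (fun w : ℝ => w * Real.exp w) (Set.Iic (-1)) := by
  apply strictAntiOn_of_deriv_neg (convex_Iic _) flam_cont.continuousOn
  intro x hx
  rw [interior_Iic] at hx
  rw [(flam_hasDeriv x).deriv]
  have h1 : x + 1 < 0 := by linarith [mem_Iio.mp hx]
  have := Real.exp_pos x
  nlinarith

private lemma flam_neg1 : (-1 : ℝ) * Real.exp (-1) = -Real.exp (-1) := by ring

private lemma LW0_exists {z : ℝ} (hz : z ∈ Set.Ico (-Real.exp (-1)) 0) :
    ∃ w ∈ Set.Ico (-1 : ℝ) 0, w * Real.exp w = z := by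
  have h := intermediate_value_Ico (by norm_num : (-1:ℝ) ≤ 0) flam_cont.continuousOn
  have hz' : z ∈ Set.Ico ((-1 : ℝ) * Real.exp (-1)) ((0:ℝ) * Real.exp 0) := by
    simpa [flam_neg1] using hz
  obtain ⟨w, hw, hfw⟩ := h hz'
  exact ⟨w, hw, hfw⟩

private lemma LW0_mem {z : ℝ} (hz : z ∈ Set.Ico (-Real.exp (-1)) 0) :
    LW0neg z ∈ Set.Ico (-1 : ℝ) 0 ∧ LW0neg z * Real.exp (LW0neg z) = z :=
  ⟨Function.invFunOn_mem (LW0_exists hz), Function.invFunOn_eq (LW0_exists hz)⟩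

private lemma LWm1_exists {z : ℝ} (hz : z ∈ Set.Ioo (-Real.exp (-1)) 0) :
    ∃ w ∈ Set.Iic (-1 : ℝ), w * Real.exp w = z := by
  obtain ⟨hz1, hz2⟩ := hz
  obtain ⟨a, ha⟩ : ∃ a : ℝ, a = -1 + 4 / z := ⟨_, rfl⟩
  have hza : 4 / z < 0 := div_neg_of_pos_of_neg (by norm_num) hz2
  have haneg : a < -1 := by rw [ha]; linarith
  -- bound : a * exp a > z
  have hb : ∀ b : ℝ, 1 < b → b * Real.exp (-b) ≤ 4 / b := by
    intro b hb1
    have h1 : b / 2 + 1 ≤ Real.exp (b / 2) := by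
      have := Real.add_one_le_exp (b / 2); linarith
    have h2 : (b / 2) ^ 2 ≤ Real.exp b := by
      have hnn : (0:ℝ) ≤ b / 2 := by linarith
      calc (b / 2) ^ 2 ≤ (b / 2 + 1) ^ 2 := by nlinarith
        _ ≤ Real.exp (b / 2) ^ 2 := by nlinarith [Real.exp_pos (b/2)]
        _ = Real.exp b := by rw [← Real.exp_nat_mul]; ring_nf
    have hbpos : (0:ℝ) < b := by linarith
    have hepos := Real.exp_pos b
    rw [Real.exp_neg]
    have heq : b * (Real.exp b)⁻¹ = b / Real.exp b := by ring
    rw [heq, div_le_div_iff₀ hepos hbpos]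
    nlinarith
  have hfa : z < a * Real.exp a := by
    have h1 : (-a) * Real.exp (-(-a)) ≤ 4 / (-a) := hb (-a) (by linarith)
    have h2 : z < 4 / a := by
      rw [lt_div_iff_of_neg (by linarith : a < 0)]
      have hz0 : z ≠ 0 := ne_of_lt hz2
      have hza2 : z * a = -z + 4 := by rw [ha]; field_simp
      rw [hza2]; linarith
    have h3 : a * Real.exp a ≥ 4 / a := by
      have e1 : (4:ℝ) / (-a) = -(4 / a) := by ring
      rw [e1, neg_neg] at h1
      linarith
    linarith
  have h := intermediate_value_Icc' (le_of_lt haneg) flam_cont.continuousOn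
  have hz' : z ∈ Set.Icc ((-1:ℝ) * Real.exp (-1)) (a * Real.exp a) := by
    rw [flam_neg1]; exact ⟨le_of_lt hz1, le_of_lt hfa⟩
  obtain ⟨w, hw, hfw⟩ := h hz'
  exact ⟨w, hw.2, hfw⟩

private lemma LWm1_mem {z : ℝ} (hz : z ∈ Set.Ioo (-Real.exp (-1)) 0) :
    LWm1 z ∈ Set.Iic (-1 : ℝ) ∧ LWm1 z * Real.exp (LWm1 z) = z :=
  ⟨Function.invFunOn_mem (LWm1_exists hz), Function.invFunOn_eq (LWm1_exists hz)⟩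

private lemma hsq_deriv (x : ℝ) : HasDerivAt (fun w : ℝ => (w + 1) ^ 2) (2 * (x + 1)) x := by
  have : HasDerivAt (fun w : ℝ => (w + 1) ^ 2) (((2 : ℕ) : ℝ) * (id x + 1) ^ (2 - 1) * 1) x :=
    ((hasDerivAt_id x).add_const 1).pow 2
  convert this using 1
  simp [id]

private lemma flam_shift_deriv (x : ℝ) :
    HasDerivAt (fun w : ℝ => w * Real.exp w + Real.exp (-1)) ((x + 1) * Real.exp x) x :=
  (flam_hasDeriv x).add_const _

private lemma flam_zero_at : Tendsto (fun w : ℝ => w * Real.exp w + Real.exp (-1))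
    (𝓝 (-1)) (𝓝 0) := by
  have : ContinuousAt (fun w : ℝ => w * Real.exp w + Real.exp (-1)) (-1) :=
    (flam_cont.add continuous_const).continuousAt
  have h := this.tendsto
  simpa [flam_neg1] using h

private lemma sq_zero_at : Tendsto (fun w : ℝ => (w + 1) ^ 2) (𝓝 (-1)) (𝓝 0) := by
  have : ContinuousAt (fun w : ℝ => (w + 1) ^ 2) (-1) := by fun_prop
  have h := this.tendsto
  simpa using h

private lemma deriv_ratio (l : Filter ℝ) (hl : l ≤ 𝓟 {x | x ≠ -1}) (hl2 : l ≤ 𝓝 (-1)) :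
    Tendsto (fun x : ℝ => ((x + 1) * Real.exp x) / (2 * (x + 1))) l (𝓝 (Real.exp (-1) / 2)) := by
  have h1 : Tendsto (fun x : ℝ => Real.exp x / 2) l (𝓝 (Real.exp (-1) / 2)) :=
    ((Real.continuous_exp.div_const 2).continuousAt.tendsto).comp hl2
  apply h1.congr'
  filter_upwards [hl (mem_principal_self _)] with x hx
  have hx1 : x + 1 ≠ 0 := by
    intro h; exact hx (by linarith)
  field_simp

private lemma H_ratio_right :
    Tendsto (fun w : ℝ => (w * Real.exp w + Real.exp (-1)) / (w + 1) ^ 2)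
      (𝓝[>] (-1 : ℝ)) (𝓝 (Real.exp (-1) / 2)) := by
  apply HasDerivAt.lhopital_zero_right_on_Ioo (show (-1:ℝ) < 0 by norm_num)
    (fun x _ => flam_shift_deriv x) (fun x _ => hsq_deriv x)
  · intro x hx
    have : x + 1 > 0 := by linarith [hx.1]
    positivity
  · exact flam_zero_at.mono_left nhdsWithin_le_nhds
  · exact sq_zero_at.mono_left nhdsWithin_le_nhds
  · apply deriv_ratio
    · rw [le_principal_iff]
      filter_upwards [self_mem_nhdsWithin] with x hx
      exact ne_of_gt hx
    · exact nhdsWithin_le_nhds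

private lemma H_ratio_left :
    Tendsto (fun w : ℝ => (w * Real.exp w + Real.exp (-1)) / (w + 1) ^ 2)
      (𝓝[<] (-1 : ℝ)) (𝓝 (Real.exp (-1) / 2)) := by
  apply HasDerivAt.lhopital_zero_left_on_Ioo (show (-2:ℝ) < -1 by norm_num)
    (fun x _ => flam_shift_deriv x) (fun x _ => hsq_deriv x)
  · intro x hx
    have h1 : x + 1 < 0 := by linarith [hx.2]
    intro h
    nlinarith
  · exact flam_zero_at.mono_left nhdsWithin_le_nhds
  · exact sq_zero_at.mono_left nhdsWithin_le_nhds
  · apply deriv_ratio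
    · rw [le_principal_iff]
      filter_upwards [self_mem_nhdsWithin] with x hx
      exact ne_of_lt hx
    · exact nhdsWithin_le_nhds

private lemma LW0_tendsto :
    Tendsto LW0neg (𝓝[Set.Ioo (-Real.exp (-1)) 0] (-Real.exp (-1)))
      (𝓝[Set.Ioo (-1 : ℝ) 0] (-1)) := by
  rw [tendsto_nhdsWithin_iff]
  constructor
  · rw [tendsto_order]
    constructor
    · intro a ha
      filter_upwards [self_mem_nhdsWithin] with z hz
      have := (LW0_mem (Set.Ioo_subset_Ico_self hz)).1.1
      linarith
    · intro b hb
      rcases le_or_gt 0 b with h0 | h0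
      · filter_upwards [self_mem_nhdsWithin] with z hz
        have := (LW0_mem (Set.Ioo_subset_Ico_self hz)).1.2
        linarith
      · have hfb : -Real.exp (-1) < b * Real.exp b := by
          have := flam_mono (Set.mem_Ici.mpr (le_refl (-1:ℝ)))
            (Set.mem_Ici.mpr (le_of_lt hb)) hb
          simpa [flam_neg1] using this
        filter_upwards [self_mem_nhdsWithin,
          mem_nhdsWithin_of_mem_nhds (Iio_mem_nhds hfb)] with z hz hzlt
        by_contra hcon
        push_neg at hcon
        obtain ⟨hmem, hfz⟩ := LW0_mem (Set.Ioo_subset_Ico_self hz)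
        have : b * Real.exp b ≤ LW0neg z * Real.exp (LW0neg z) :=
          flam_mono.monotoneOn (Set.mem_Ici.mpr (le_of_lt hb))
            (Set.mem_Ici.mpr hmem.1) hcon
        rw [hfz] at this
        exact absurd hzlt (not_lt.mpr this)
  · filter_upwards [self_mem_nhdsWithin] with z hz
    obtain ⟨⟨h1, h2⟩, hf⟩ := LW0_mem (Set.Ioo_subset_Ico_self hz)
    refine ⟨lt_of_le_of_ne h1 fun h => ?_, h2⟩
    rw [← h, flam_neg1] at hf
    exact absurd hf hz.1.ne

private lemma LWm1_tendsto :
    Tendsto LWm1 (𝓝[Set.Ioo (-Real.exp (-1)) 0] (-Real.exp (-1)))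
      (𝓝[<] (-1 : ℝ)) := by
  rw [tendsto_nhdsWithin_iff]
  constructor
  · rw [tendsto_order]
    constructor
    · intro a ha
      have hfa : -Real.exp (-1) < a * Real.exp a := by
        have := flam_anti (Set.mem_Iic.mpr (le_of_lt ha))
          (Set.mem_Iic.mpr (le_refl (-1:ℝ))) ha
        simpa [flam_neg1] using this
      filter_upwards [self_mem_nhdsWithin,
        mem_nhdsWithin_of_mem_nhds (Iio_mem_nhds hfa)] with z hz hzlt
      by_contra hcon
      push_neg at hcon
      obtain ⟨hmem, hfz⟩ := LWm1_mem hz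
      have : a * Real.exp a ≤ LWm1 z * Real.exp (LWm1 z) :=
        flam_anti.antitoneOn (Set.mem_Iic.mpr hmem)
          (Set.mem_Iic.mpr (le_of_lt ha)) hcon
      rw [hfz] at this
      exact absurd hzlt (not_lt.mpr this)
    · intro b hb
      filter_upwards [self_mem_nhdsWithin] with z hz
      have := (LWm1_mem hz).1
      exact lt_of_le_of_lt this hb
  · filter_upwards [self_mem_nhdsWithin] with z hz
    obtain ⟨h1, hf⟩ := LWm1_mem hz
    rw [Set.mem_Iio]
    refine lt_of_le_of_ne h1 fun h => ?_
    rw [h, flam_neg1] at hf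
    exact absurd hf hz.1.ne

private lemma t_tendsto (lf : Filter ℝ)
    (h : Tendsto (fun w : ℝ => (w * Real.exp w + Real.exp (-1)) / (w + 1) ^ 2) lf
      (𝓝 (Real.exp (-1) / 2))) :
    Tendsto (fun w : ℝ =>
      Real.sqrt ((2 * Real.exp 1 * ((w * Real.exp w + Real.exp (-1)) / (w + 1) ^ 2))⁻¹))
      lf (𝓝 1) := by
  have h1 : Tendsto (fun w : ℝ =>
      2 * Real.exp 1 * ((w * Real.exp w + Real.exp (-1)) / (w + 1) ^ 2)) lf (𝓝 1) := by
    have := h.const_mul (2 * Real.exp 1)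
    have he : 2 * Real.exp 1 * (Real.exp (-1) / 2) = 1 := by
      rw [show 2 * Real.exp 1 * (Real.exp (-1) / 2) = Real.exp 1 * Real.exp (-1) by ring,
        ← Real.exp_add]
      norm_num
    rwa [he] at this
  have h2 := h1.inv₀ (by norm_num)
  have h3 := (Real.continuous_sqrt.continuousAt (x := (1:ℝ))).tendsto.comp (by simpa using h2)
  simpa [Function.comp_def] using h3

private lemma Hpos_right {w : ℝ} (hw : w ∈ Set.Ioo (-1 : ℝ) 0) :
    0 < w * Real.exp w + Real.exp (-1) := by
  have := flam_mono (Set.mem_Ici.mpr (le_refl (-1:ℝ))) (Set.mem_Ici.mpr (le_of_lt hw.1)) hw.1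
  simp only [flam_neg1] at this
  linarith

private lemma Hpos_left {w : ℝ} (hw : w < -1) :
    0 < w * Real.exp w + Real.exp (-1) := by
  have := flam_anti (Set.mem_Iic.mpr (le_of_lt hw)) (Set.mem_Iic.mpr (le_refl (-1:ℝ))) hw
  simp only [flam_neg1] at this
  linarith

private lemma sqrt_eq_ratio {w : ℝ} (hH : 0 < w * Real.exp w + Real.exp (-1)) (hw : w + 1 ≠ 0) :
    Real.sqrt ((2 * Real.exp 1 * ((w * Real.exp w + Real.exp (-1)) / (w + 1) ^ 2))⁻¹)
      = |w + 1| / Real.sqrt (2 * Real.exp 1 * (w * Real.exp w + Real.exp (-1))) := by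
  have hinv : (2 * Real.exp 1 * ((w * Real.exp w + Real.exp (-1)) / (w + 1) ^ 2))⁻¹
      = (w + 1) ^ 2 / (2 * Real.exp 1 * (w * Real.exp w + Real.exp (-1))) := by
    field_simp
  rw [hinv, Real.sqrt_div (sq_nonneg _), Real.sqrt_sq_eq_abs]

/-- As `z → (−e⁻¹)⁺` along `(−e⁻¹, 0)`,
`(LW₀(z)+1)/√(2e·(z+e⁻¹)) → 1` and `(LW₋₁(z)+1)/√(2e·(z+e⁻¹)) → −1`. -/
theorem lambertW_branch_behavior :
    Filter.Tendsto
      (fun z => (LW0neg z + 1) / Real.sqrt (2 * Real.exp 1 * (z + Real.exp (-1))))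
      (nhdsWithin (-Real.exp (-1)) (Set.Ioo (-Real.exp (-1)) 0)) (nhds 1) ∧
    Filter.Tendsto
      (fun z => (LWm1 z + 1) / Real.sqrt (2 * Real.exp 1 * (z + Real.exp (-1))))
      (nhdsWithin (-Real.exp (-1)) (Set.Ioo (-Real.exp (-1)) 0)) (nhds (-1)) := by
  constructor
  · -- LW0 branch
    have hG : Tendsto (fun w : ℝ =>
        (w + 1) / Real.sqrt (2 * Real.exp 1 * (w * Real.exp w + Real.exp (-1))))
        (𝓝[Set.Ioo (-1 : ℝ) 0] (-1)) (𝓝 1) := by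
      have ht := t_tendsto (𝓝[Set.Ioo (-1 : ℝ) 0] (-1)) (H_ratio_right.mono_left
        (nhdsWithin_mono _ Set.Ioo_subset_Ioi_self))
      apply ht.congr'
      filter_upwards [self_mem_nhdsWithin] with w hw
      have hw1 : 0 < w + 1 := by linarith [hw.1]
      rw [sqrt_eq_ratio (Hpos_right hw) (ne_of_gt hw1), abs_of_pos hw1]
    have := hG.comp LW0_tendsto
    apply this.congr'
    filter_upwards [self_mem_nhdsWithin] with z hz
    have hf := (LW0_mem (Set.Ioo_subset_Ico_self hz)).2
    simp only [Function.comp_apply]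
    rw [hf]
  · have hG : Tendsto (fun w : ℝ =>
        (w + 1) / Real.sqrt (2 * Real.exp 1 * (w * Real.exp w + Real.exp (-1))))
        (𝓝[<] (-1 : ℝ)) (𝓝 (-1)) := by
      have ht := t_tendsto _ H_ratio_left
      have ht' := ht.neg
      rw [show -(1:ℝ) = -1 by norm_num] at ht'
      apply ht'.congr'
      filter_upwards [self_mem_nhdsWithin] with w hw
      have hw1 : w + 1 < 0 := by simp only [Set.mem_Iio] at hw; linarith
      rw [show -Real.sqrt ((2 * Real.exp 1 *
          ((w * Real.exp w + Real.exp (-1)) / (w + 1) ^ 2))⁻¹) =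
          -(Real.sqrt ((2 * Real.exp 1 *
          ((w * Real.exp w + Real.exp (-1)) / (w + 1) ^ 2))⁻¹)) from rfl,
        sqrt_eq_ratio (Hpos_left (by linarith)) (ne_of_lt hw1), abs_of_neg hw1]
      ring
    have := hG.comp LWm1_tendsto
    apply this.congr'
    filter_upwards [self_mem_nhdsWithin] with z hz
    have hf := (LWm1_mem hz).2
    simp only [Function.comp_apply]
    rw [hf]
end
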